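/- Let H be self-adjoint, and let Ψ_k : [0, τ] → ℋ take values in unit vectors with Ψ_k(t) ∈ D(H) for all t, ξ_k := sup_t ‖H Ψ_k(t)‖ < ∞ and η_k := sup_{s≠t} ‖Ψ_k(s) − Ψ_k(t)‖ / |s − t| < ∞. Suppose Φ is a unit vector with ⟨Ψ_k(t_l), Φ⟩ = 0. Then for Δ_{l+1} := t_{l+1} − t_l > 0, one has |⟨Ψ_k(t_{l+1}), e^{-iΔ_{l+1} H} Φ⟩|² ≤ 2 Δ_{l+1}² (ξ_k² + η_k²). -/

import Mathlib

open scoped InnerProductSpace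

/-- The unitary group `e^{-isH}` generated by a (bounded) self-adjoint operator `H`. -/
noncomputable def timeEvol {𝓗 : Type*} [NormedAddCommGroup 𝓗] [InnerProductSpace ℂ 𝓗]
    [CompleteSpace 𝓗] (H : 𝓗 →L[ℂ] 𝓗) (s : ℝ) : 𝓗 →L[ℂ] 𝓗 :=
  NormedSpace.exp ((-(s : ℂ)) • Complex.I • H)

section aux

variable {𝓗 : Type*} [NormedAddCommGroup 𝓗] [InnerProductSpace ℂ 𝓗] [CompleteSpace 𝓗]

lemma star_smul_I_smul (H : 𝓗 →L[ℂ] 𝓗) (hH : IsSelfAdjoint H) (c : ℝ) :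
    star ((c : ℂ) • Complex.I • H) = -((c : ℂ) • Complex.I • H) := by
  rw [star_smul, star_smul, hH.star_eq]
  simp [Complex.conj_I, neg_smul, smul_neg]

lemma skew_mem (H : 𝓗 →L[ℂ] 𝓗) (hH : IsSelfAdjoint H) (c : ℝ) :
    (c : ℂ) • Complex.I • H ∈ skewAdjoint (𝓗 →L[ℂ] 𝓗) := by
  rw [skewAdjoint.mem_iff]
  exact star_smul_I_smul H hH c

lemma norm_exp_apply (H : 𝓗 →L[ℂ] 𝓗) (hH : IsSelfAdjoint H) (c : ℝ) (x : 𝓗) :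
    ‖NormedSpace.exp ((c : ℂ) • Complex.I • H) x‖ = ‖x‖ := by
  set U := NormedSpace.exp ((c : ℂ) • Complex.I • H) with hU
  have hmem : U ∈ unitary (𝓗 →L[ℂ] 𝓗) := by
    let +nondep : NormedAlgebra ℚ (𝓗 →L[ℂ] 𝓗) := .restrictScalars ℚ ℂ (𝓗 →L[ℂ] 𝓗)
    exact NormedSpace.exp_mem_unitary_of_mem_skewAdjoint (skew_mem H hH c)
  have h1 : star U * U = 1 := (Unitary.mem_iff.mp hmem).1
  have hinner : ⟪U x, U x⟫_ℂ = ⟪x, x⟫_ℂ := by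
    rw [← ContinuousLinearMap.adjoint_inner_right, ← ContinuousLinearMap.star_eq_adjoint]
    have : star U (U x) = (star U * U) x := rfl
    rw [this, h1]
    rfl
  have h2 : ‖U x‖ ^ 2 = ‖x‖ ^ 2 := by
    rw [inner_self_eq_norm_sq_to_K, inner_self_eq_norm_sq_to_K] at hinner
    exact_mod_cast hinner
  calc ‖U x‖ = Real.sqrt (‖U x‖ ^ 2) := (Real.sqrt_sq (norm_nonneg _)).symm
    _ = Real.sqrt (‖x‖ ^ 2) := by rw [h2]
    _ = ‖x‖ := Real.sqrt_sq (norm_nonneg _)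

lemma key_estimate (H : 𝓗 →L[ℂ] 𝓗) (hH : IsSelfAdjoint H) (Δ : ℝ) (hΔ : 0 ≤ Δ) (ψ : 𝓗) :
    ‖NormedSpace.exp ((Δ : ℂ) • Complex.I • H) ψ - ψ‖ ≤ Δ * ‖H ψ‖ := by
  set A : 𝓗 →L[ℂ] 𝓗 := Complex.I • H with hA
  set g : ℝ → 𝓗 := fun s => NormedSpace.exp ((s : ℂ) • A) ψ with hg
  have hexp_eq : (NormedSpace.exp : (𝓗 →L[ℂ] 𝓗) → _) = NormedSpace.exp :=
    rfl
  have hsmul : ∀ u : ℝ, (u : ℂ) • A = u • A := fun u => (Complex.coe_smul u A).symm ▸ rfl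
  have hderiv : ∀ s : ℝ, HasDerivAt g (NormedSpace.exp ((s : ℂ) • A) (A ψ)) s := by
    intro s
    have h0 : HasDerivAt (fun u : ℝ => NormedSpace.exp (u • A))
        (NormedSpace.exp (s • A) * A) s := hasDerivAt_exp_smul_const A s
    set L : (𝓗 →L[ℂ] 𝓗) →L[ℝ] 𝓗 :=
      ((ContinuousLinearMap.apply ℂ 𝓗 ψ).restrictScalars ℝ) with hL
    have h1 := L.hasFDerivAt.comp_hasDerivAt s h0
    have hgeq : g = (fun T => L T) ∘ (fun u : ℝ => NormedSpace.exp (u • A)) := by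
      funext u
      simp [hg, hL, hexp_eq, hsmul u, Function.comp]
    rw [hgeq]
    convert h1 using 1
    simp [hL, hexp_eq, hsmul s]
  have hbound : ∀ s ∈ Set.Icc (0 : ℝ) Δ,
      ‖NormedSpace.exp ((s : ℂ) • A) (A ψ)‖ ≤ ‖H ψ‖ := by
    intro s _
    rw [norm_exp_apply H hH s (A ψ)]
    simp [hA, norm_smul]
  have hmv := Convex.norm_image_sub_le_of_norm_hasDerivWithin_le
    (f := g) (f' := fun s => NormedSpace.exp ((s : ℂ) • A) (A ψ)) (C := ‖H ψ‖)
    (fun s hs => (hderiv s).hasDerivWithinAt) hbound (convex_Icc 0 Δ)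
    (Set.left_mem_Icc.mpr hΔ) (Set.right_mem_Icc.mpr hΔ)
  have hg0 : g 0 = ψ := by simp [hg]
  have : ‖g Δ - g 0‖ ≤ ‖H ψ‖ * ‖Δ - 0‖ := hmv
  rw [hg0] at this
  calc ‖NormedSpace.exp ((Δ : ℂ) • A) ψ - ψ‖ ≤ ‖H ψ‖ * ‖Δ - 0‖ := this
    _ = Δ * ‖H ψ‖ := by rw [sub_zero, Real.norm_eq_abs, abs_of_nonneg hΔ]; ring

lemma adjoint_timeEvol (H : 𝓗 →L[ℂ] 𝓗) (hH : IsSelfAdjoint H) (s : ℝ) :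
    ContinuousLinearMap.adjoint (timeEvol H s) =
      NormedSpace.exp ((s : ℂ) • Complex.I • H) := by
  rw [← ContinuousLinearMap.star_eq_adjoint, timeEvol, NormedSpace.star_exp]
  congr 1
  have := star_smul_I_smul H hH (-s)
  push_cast at this ⊢
  rw [this, neg_smul, neg_neg]

end aux

/-- Let `H` be self-adjoint and `Ψk : [0,τ] → 𝓗` a curve of unit vectors with
`‖H Ψk(t)‖ ≤ ξ` and Lipschitz constant `η` on `[0,τ]`.  If `Φ` is a unit vector with
`⟨Ψk(t_l), Φ⟩ = 0`, then for `Δ = t_{l+1} − t_l > 0`,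
`|⟨Ψk(t_{l+1}), e^{-iΔH} Φ⟩|² ≤ 2 Δ² (ξ² + η²)`. -/
theorem leakage_one_step_estimate {𝓗 : Type*} [NormedAddCommGroup 𝓗]
    [InnerProductSpace ℂ 𝓗] [CompleteSpace 𝓗]
    (H : 𝓗 →L[ℂ] 𝓗) (hH : IsSelfAdjoint H) (τ : ℝ) (hτ : 0 < τ)
    (Ψk : ℝ → 𝓗) (hunit : ∀ t ∈ Set.Icc (0 : ℝ) τ, ‖Ψk t‖ = 1)
    (ξ η : ℝ)
    (hξ : ∀ t ∈ Set.Icc (0 : ℝ) τ, ‖H (Ψk t)‖ ≤ ξ)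
    (hη : ∀ s ∈ Set.Icc (0 : ℝ) τ, ∀ t ∈ Set.Icc (0 : ℝ) τ,
      ‖Ψk s - Ψk t‖ ≤ η * |s - t|)
    (tl tl1 : ℝ) (htl : tl ∈ Set.Icc (0 : ℝ) τ) (htl1 : tl1 ∈ Set.Icc (0 : ℝ) τ)
    (hΔ : 0 < tl1 - tl)
    (Φ : 𝓗) (hΦ : ‖Φ‖ = 1) (horth : ⟪Ψk tl, Φ⟫_ℂ = 0) :
    ‖⟪Ψk tl1, timeEvol H (tl1 - tl) Φ⟫_ℂ‖ ^ 2 ≤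
      2 * (tl1 - tl) ^ 2 * (ξ ^ 2 + η ^ 2) := by
  set Δ := tl1 - tl with hΔdef
  set ψ := Ψk tl1 with hψ
  set U := NormedSpace.exp ((Δ : ℂ) • Complex.I • H) with hU
  have hshift : ⟪ψ, timeEvol H Δ Φ⟫_ℂ = ⟪U ψ, Φ⟫_ℂ := by
    rw [hU, ← adjoint_timeEvol H hH Δ, ContinuousLinearMap.adjoint_inner_left]
  have hsplit : ⟪U ψ, Φ⟫_ℂ = ⟪(U ψ - ψ) + (ψ - Ψk tl), Φ⟫_ℂ := by
    rw [inner_add_left, inner_sub_left, inner_sub_left, horth]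
    ring
  have h1 : ‖U ψ - ψ‖ ≤ Δ * ξ := by
    calc ‖U ψ - ψ‖ ≤ Δ * ‖H ψ‖ := key_estimate H hH Δ hΔ.le ψ
      _ ≤ Δ * ξ := by
        have := hξ tl1 htl1
        exact mul_le_mul_of_nonneg_left this hΔ.le
  have h2 : ‖ψ - Ψk tl‖ ≤ Δ * η := by
    have := hη tl1 htl1 tl htl
    rwa [abs_of_pos hΔ, mul_comm] at this
  have hcs : ‖⟪(U ψ - ψ) + (ψ - Ψk tl), Φ⟫_ℂ‖ ≤ Δ * ξ + Δ * η := by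
    calc ‖⟪(U ψ - ψ) + (ψ - Ψk tl), Φ⟫_ℂ‖ ≤ ‖(U ψ - ψ) + (ψ - Ψk tl)‖ * ‖Φ‖ :=
          norm_inner_le_norm _ _
      _ = ‖(U ψ - ψ) + (ψ - Ψk tl)‖ := by rw [hΦ, mul_one]
      _ ≤ ‖U ψ - ψ‖ + ‖ψ - Ψk tl‖ := norm_add_le _ _
      _ ≤ Δ * ξ + Δ * η := add_le_add h1 h2
  have hfinal : ‖⟪ψ, timeEvol H Δ Φ⟫_ℂ‖ ≤ Δ * ξ + Δ * η := by
    rw [hshift, hsplit]; exact hcs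
  have hsq : ‖⟪ψ, timeEvol H Δ Φ⟫_ℂ‖ ^ 2 ≤ (Δ * ξ + Δ * η) ^ 2 :=
    pow_le_pow_left₀ (norm_nonneg _) hfinal 2
  calc ‖⟪ψ, timeEvol H Δ Φ⟫_ℂ‖ ^ 2 ≤ (Δ * ξ + Δ * η) ^ 2 := hsq
    _ ≤ 2 * Δ ^ 2 * (ξ ^ 2 + η ^ 2) := by nlinarith [sq_nonneg (Δ * ξ - Δ * η)]
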